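/- Let the perturbations X̂, Ŷ : [0,∞) → (ℝ^m)^V evolve according to the linearized graph-coupled oscillator ODE X̂_i'(t) = Ŷ_i(t), Ŷ_i'(t) = Σ_{j∈N_i} Â_ij X̂_j(t) − X̂_i(t) − α Ŷ_i(t) for all i ∈ V, with α ≥ 0 and Â right-stochastic (0 ≤ Â_ij ≤ 1 for all j ∈ N_i and Σ_{j∈N_i} Â_ij = 1 for every i ∈ V). Then for every node i ∈ V and every t ≥ 0 the following node-wise energy identity holds: (d/dt)[‖Ŷ_i(t)‖²/2 + Σ_{j∈N_i} (Â_ij/2) · ‖X̂_j(t) − X̂_i(t)‖²/2] + α ‖Ŷ_i(t)‖² = Σ_{j∈N_i} Â_ij ⟨(Ŷ_i(t) + Ŷ_j(t))/2, X̂_j(t) − X̂_i(t)⟩. -/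

import Mathlib

/-- **Node-wise energy identity for the damped linearized graph-coupled oscillator system.**
If `X̂_i' = Ŷ_i` and `Ŷ_i' = ∑_{j∈N_i} Â i j • X̂_j − X̂_i − α Ŷ_i` on `[0,∞)` with `α ≥ 0`
and `Â` right-stochastic, then for each node `i` and each `t ≥ 0`,
`(d/dt)[‖Ŷ_i‖²/2 + ∑_{j∈N_i} (Â_ij/2)·‖X̂_j−X̂_i‖²/2] + α‖Ŷ_i‖²
  = ∑_{j∈N_i} Â_ij ⟨(Ŷ_i+Ŷ_j)/2, X̂_j−X̂_i⟩`. -/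
theorem stmt_4 {v m : ℕ} (G : SimpleGraph (Fin v)) [DecidableRel G.Adj]
    (A : Fin v → Fin v → ℝ)
    (hA0 : ∀ i j : Fin v, ¬ G.Adj i j → A i j = 0)
    (α : ℝ) (hα : 0 ≤ α)
    (hA01 : ∀ i j : Fin v, j ∈ G.neighborFinset i → 0 ≤ A i j ∧ A i j ≤ 1)
    (hArow : ∀ i : Fin v, ∑ j ∈ G.neighborFinset i, A i j = 1)
    (X Y : ℝ → Fin v → EuclideanSpace ℝ (Fin m))
    (hX : ∀ (i : Fin v) (t : ℝ), 0 ≤ t → HasDerivAt (fun s => X s i) (Y t i) t)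
    (hY : ∀ (i : Fin v) (t : ℝ), 0 ≤ t →
      HasDerivAt (fun s => Y s i)
        ((∑ j ∈ G.neighborFinset i, A i j • X t j) - X t i - α • Y t i) t)
    (i : Fin v) (t : ℝ) (ht : 0 ≤ t) :
    HasDerivAt
      (fun s => ‖Y s i‖ ^ 2 / 2
        + ∑ j ∈ G.neighborFinset i, (A i j / 2) * (‖X s j - X s i‖ ^ 2 / 2))
      ((∑ j ∈ G.neighborFinset i,
          A i j * (inner ℝ (((1:ℝ)/2) • (Y t i + Y t j)) (X t j - X t i) : ℝ))
        - α * ‖Y t i‖ ^ 2) t := by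
  have hYd := hY i t ht
  set W : EuclideanSpace ℝ (Fin m) :=
    (∑ j ∈ G.neighborFinset i, A i j • X t j) - X t i - α • Y t i with hW
  -- derivative of ‖Y i‖^2/2
  have h1 : HasDerivAt (fun s => ‖Y s i‖ ^ 2 / 2) (inner ℝ W (Y t i) : ℝ) t := by
    have h := (hYd.inner ℝ hYd).div_const 2
    have he : ((inner ℝ (Y t i) W : ℝ) + (inner ℝ W (Y t i) : ℝ)) / 2
        = (inner ℝ W (Y t i) : ℝ) := by
      rw [real_inner_comm (Y t i) W]; ring
    rw [he] at h
    convert h using 2 with s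
    case e'_4 => rfl
    case e'_5 => rfl
    rw [real_inner_self_eq_norm_sq]
  -- derivative of each summand
  have h2 : ∀ j ∈ G.neighborFinset i,
      HasDerivAt (fun s => (A i j / 2) * (‖X s j - X s i‖ ^ 2 / 2))
        ((A i j / 2) * (inner ℝ (Y t j - Y t i) (X t j - X t i) : ℝ)) t := by
    intro j _
    have hd : HasDerivAt (fun s => X s j - X s i) (Y t j - Y t i) t :=
      (hX j t ht).sub (hX i t ht)
    have h := (hd.inner ℝ hd).div_const 2
    have he : ((inner ℝ (X t j - X t i) (Y t j - Y t i) : ℝ)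
        + (inner ℝ (Y t j - Y t i) (X t j - X t i) : ℝ)) / 2
        = (inner ℝ (Y t j - Y t i) (X t j - X t i) : ℝ) := by
      rw [real_inner_comm (X t j - X t i)]; ring
    rw [he] at h
    have := h.const_mul (A i j / 2)
    convert this using 2 with s
    case e'_4 => rfl
    case e'_5 => rfl
    rw [real_inner_self_eq_norm_sq]
  have hfull := h1.add (HasDerivAt.fun_sum h2)
  convert hfull using 1
  case e'_4 => rfl
  case e'_5 => rfl
  case e'_8 => rfl
  -- value equality
  rw [hW]
  simp only [inner_sub_left, inner_smul_left, sum_inner, RCLike.inner_apply, conj_trivial]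
  rw [← real_inner_self_eq_norm_sq]
  have hX_i : (inner ℝ (X t i) (Y t i) : ℝ)
      = ∑ j ∈ G.neighborFinset i, A i j * (inner ℝ (X t i) (Y t i) : ℝ) := by
    rw [← Finset.sum_mul, hArow, one_mul]
  rw [hX_i, ← Finset.sum_sub_distrib, sub_add_eq_add_sub, ← Finset.sum_add_distrib]
  congr 1
  apply Finset.sum_congr rfl
  intro j _
  simp only [inner_smul_left, inner_add_left, inner_sub_left, inner_sub_right,
    inner_add_right, conj_trivial]
  rw [real_inner_comm (X t j) (Y t i), real_inner_comm (X t i) (Y t i)]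
  ring_nf
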